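/- Let x₁,…,xₙ ∈ B_d ⊆ ℝ^d (Euclidean ball of diameter 1), fix an integer k ≥ 1, a real p ≥ 1, and ε ∈ (0, 1/4), and let π : ℝ^d → ℝ^m be a map with π(xᵢ) ∈ B_m for every i. Suppose that for every finite sequence y₁,…,y_N with each yⱼ ∈ {x₁,…,xₙ} and every k-partition 𝒞 of y₁,…,y_N, the uniform-weight sample partition costs satisfy (1+ε)^{−1}·ĉost(𝒞) ≤ ĉost(π(𝒞)) ≤ (1+ε)·ĉost(𝒞). Then for every vector w of nonnegative weights summing to 1, the optimal weighted clustering costs ŴOPT(w) := min over k-partitions 𝒞 of ĉost(𝒞,w) and ŴOPT_π(w) := min over k-partitions 𝒞 of ĉost(π(𝒞),w) satisfy (1+ε)^{−3}·ŴOPT(w) ≤ ŴOPT_π(w) ≤ (1+ε)³·ŴOPT(w). -/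
import Mathlib


/-- The weighted sample `(k,p)`-partition cost of points `y₁, …, yₙ` labelled by
`ℓ : Fin n → Fin k`, with weights `w` and centers ranging over the ball of diameter 1. -/
noncomputable def sampleCost {E : Type*} [NormedAddCommGroup E] {n k : ℕ}
    (p : ℝ) (y : Fin n → E) (ℓ : Fin n → Fin k) (w : Fin n → ℝ) : ℝ :=
  ⨅ u : Fin k → (Metric.closedBall (0 : E) (1 / 2)),
    ∑ i, w i * ‖y i - (u (ℓ i) : E)‖ ^ p

/-- The optimal weighted sample `(k,p)`-clustering cost: the minimum of the weighted
partition cost over all `k`-partitions of the points. -/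
noncomputable def sampleOPT {E : Type*} [NormedAddCommGroup E] {n : ℕ} (k : ℕ)
    (p : ℝ) (y : Fin n → E) (w : Fin n → ℝ) : ℝ :=
  ⨅ ℓ : Fin n → Fin k, sampleCost p y ℓ w

section aux
variable {E : Type*} [NormedAddCommGroup E] {n k : ℕ}

instance ballNonempty : Nonempty (Metric.closedBall (0 : E) (1 / 2)) :=
  ⟨⟨0, Metric.mem_closedBall_self (by norm_num)⟩⟩

lemma sampleCost_bddBelow (p : ℝ) (y : Fin n → E) (ℓ : Fin n → Fin k) {w : Fin n → ℝ}
    (hw : ∀ i, 0 ≤ w i) :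
    BddBelow (Set.range fun u : Fin k → (Metric.closedBall (0 : E) (1 / 2)) =>
      ∑ i, w i * ‖y i - (u (ℓ i) : E)‖ ^ p) := by
  refine ⟨0, ?_⟩
  rintro _ ⟨u, rfl⟩
  exact Finset.sum_nonneg fun i _ => mul_nonneg (hw i) (Real.rpow_nonneg (norm_nonneg _) _)

lemma sampleCost_nonneg (p : ℝ) (y : Fin n → E) (ℓ : Fin n → Fin k) {w : Fin n → ℝ}
    (hw : ∀ i, 0 ≤ w i) : 0 ≤ sampleCost p y ℓ w :=
  Real.iInf_nonneg fun _ =>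
    Finset.sum_nonneg fun i _ => mul_nonneg (hw i) (Real.rpow_nonneg (norm_nonneg _) _)

lemma sampleCost_le (p : ℝ) (y : Fin n → E) (ℓ : Fin n → Fin k) {w : Fin n → ℝ}
    (hw : ∀ i, 0 ≤ w i) (u : Fin k → (Metric.closedBall (0 : E) (1 / 2))) :
    sampleCost p y ℓ w ≤ ∑ i, w i * ‖y i - (u (ℓ i) : E)‖ ^ p :=
  ciInf_le (sampleCost_bddBelow p y ℓ hw) u

lemma term_le_one {p : ℝ} (hp : 0 ≤ p) {a b : E} (ha : a ∈ Metric.closedBall (0 : E) (1/2))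
    (hb : b ∈ Metric.closedBall (0 : E) (1/2)) : ‖a - b‖ ^ p ≤ 1 := by
  rw [Metric.mem_closedBall, dist_zero_right] at ha hb
  refine Real.rpow_le_one (norm_nonneg _) ?_ hp
  calc ‖a - b‖ ≤ ‖a‖ + ‖b‖ := norm_sub_le _ _
    _ ≤ 1 := by linarith

lemma sampleCost_lipschitz {p : ℝ} (hp : 0 ≤ p) {y : Fin n → E}
    (hy : ∀ i, y i ∈ Metric.closedBall (0 : E) (1/2)) (ℓ : Fin n → Fin k)
    {w w' : Fin n → ℝ} (hw : ∀ i, 0 ≤ w i) (hw' : ∀ i, 0 ≤ w' i) :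
    sampleCost p y ℓ w ≤ sampleCost p y ℓ w' + ∑ i, |w i - w' i| := by
  rw [← sub_le_iff_le_add]
  refine le_ciInf fun u => ?_
  rw [sub_le_iff_le_add]
  calc sampleCost p y ℓ w ≤ ∑ i, w i * ‖y i - (u (ℓ i) : E)‖ ^ p :=
        sampleCost_le p y ℓ hw u
    _ ≤ (∑ i, w' i * ‖y i - (u (ℓ i) : E)‖ ^ p) + ∑ i, |w i - w' i| := by
        rw [← Finset.sum_add_distrib]
        refine Finset.sum_le_sum fun i _ => ?_
        have h1 : 0 ≤ ‖y i - (u (ℓ i) : E)‖ ^ p := Real.rpow_nonneg (norm_nonneg _) _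
        have h2 : ‖y i - (u (ℓ i) : E)‖ ^ p ≤ 1 := term_le_one hp (hy i) (u (ℓ i)).2
        nlinarith [abs_nonneg (w i - w' i), le_abs_self (w i - w' i)]
end aux

section aux2
variable {E : Type*} [NormedAddCommGroup E] {n k : ℕ}

lemma sampleOPT_nonneg (p : ℝ) (y : Fin n → E) {w : Fin n → ℝ}
    (hw : ∀ i, 0 ≤ w i) : 0 ≤ sampleOPT k p y w :=
  Real.iInf_nonneg fun ℓ => sampleCost_nonneg p y ℓ hw

lemma sampleOPT_bddBelow (p : ℝ) (y : Fin n → E) {w : Fin n → ℝ}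
    (hw : ∀ i, 0 ≤ w i) :
    BddBelow (Set.range fun ℓ : Fin n → Fin k => sampleCost p y ℓ w) := by
  refine ⟨0, ?_⟩
  rintro _ ⟨ℓ, rfl⟩
  exact sampleCost_nonneg p y ℓ hw

lemma sampleOPT_le (p : ℝ) (y : Fin n → E) {w : Fin n → ℝ}
    (hw : ∀ i, 0 ≤ w i) (ℓ : Fin n → Fin k) :
    sampleOPT k p y w ≤ sampleCost p y ℓ w :=
  ciInf_le (sampleOPT_bddBelow p y hw) ℓ

lemma sampleOPT_lipschitz (hk : 1 ≤ k) {p : ℝ} (hp : 0 ≤ p) {y : Fin n → E}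
    (hy : ∀ i, y i ∈ Metric.closedBall (0 : E) (1/2))
    {w w' : Fin n → ℝ} (hw : ∀ i, 0 ≤ w i) (hw' : ∀ i, 0 ≤ w' i) :
    sampleOPT k p y w ≤ sampleOPT k p y w' + ∑ i, |w i - w' i| := by
  haveI : Nonempty (Fin k) := ⟨⟨0, hk⟩⟩
  rw [← sub_le_iff_le_add]
  refine le_ciInf fun ℓ => ?_
  rw [sub_le_iff_le_add]
  calc sampleOPT k p y w ≤ sampleCost p y ℓ w := sampleOPT_le p y hw ℓ
    _ ≤ sampleCost p y ℓ w' + ∑ i, |w i - w' i| := sampleCost_lipschitz hp hy ℓ hw hw'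

/-- If each cost of `g` is at most `C` times that of `f`, same for infima. -/
lemma iInf_le_mul_iInf (hk : 1 ≤ k) {C : ℝ} (hC : 0 < C) {f g : (Fin n → Fin k) → ℝ}
    (hg : ∀ ℓ, 0 ≤ g ℓ) (h : ∀ ℓ, g ℓ ≤ C * f ℓ) :
    (⨅ ℓ, g ℓ) ≤ C * ⨅ ℓ, f ℓ := by
  haveI : Nonempty (Fin k) := ⟨⟨0, hk⟩⟩
  rw [← div_le_iff₀' hC]
  refine le_ciInf fun ℓ => ?_
  rw [div_le_iff₀' hC]
  calc (⨅ ℓ, g ℓ) ≤ g ℓ := ciInf_le ⟨0, by rintro _ ⟨ℓ, rfl⟩; exact hg ℓ⟩ ℓ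
    _ ≤ C * f ℓ := h ℓ
end aux2

section rep
variable {E : Type*} [NormedAddCommGroup E] {n k : ℕ}

lemma sampleCost_replicate {N : ℕ} (a : Fin n → ℕ) (hN : ∑ i, a i = N)
    (p : ℝ) (y : Fin n → E) (ℓ : Fin n → Fin k)
    (e : Fin N ≃ (Σ i : Fin n, Fin (a i))) :
    sampleCost p (fun j => y (e j).1) (fun j => ℓ (e j).1) (fun _ => (N : ℝ)⁻¹)
      = sampleCost p y ℓ (fun i => (a i : ℝ) / N) := by
  unfold sampleCost
  refine iInf_congr fun u => ?_
  calc ∑ j, (N : ℝ)⁻¹ * ‖y (e j).1 - (u (ℓ (e j).1) : E)‖ ^ p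
      = ∑ s : Σ i : Fin n, Fin (a i), (N : ℝ)⁻¹ * ‖y s.1 - (u (ℓ s.1) : E)‖ ^ p :=
        Equiv.sum_comp e (fun s : Σ i : Fin n, Fin (a i) => (N : ℝ)⁻¹ * ‖y s.1 - (u (ℓ s.1) : E)‖ ^ p)
    _ = ∑ i, ∑ _r : Fin (a i), (N : ℝ)⁻¹ * ‖y i - (u (ℓ i) : E)‖ ^ p := by
        rw [← Finset.univ_sigma_univ, Finset.sum_sigma]
    _ = ∑ i, (a i : ℝ) / N * ‖y i - (u (ℓ i) : E)‖ ^ p := by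
        refine Finset.sum_congr rfl fun i _ => ?_
        rw [Finset.sum_const, Finset.card_univ, Fintype.card_fin, nsmul_eq_mul]
        ring
end rep

lemma rational_step {d m n k : ℕ} (hk : 1 ≤ k) (p : ℝ) (ε : ℝ) (hε0 : 0 < ε)
    (x : Fin n → EuclideanSpace ℝ (Fin d))
    (π : EuclideanSpace ℝ (Fin d) → EuclideanSpace ℝ (Fin m))
    (hpres : ∀ (M : ℕ) (y : Fin M → EuclideanSpace ℝ (Fin d)),
      (∀ j, ∃ i, y j = x i) → ∀ ℓ : Fin M → Fin k,
        (1 + ε)⁻¹ * sampleCost p y ℓ (fun _ => (M : ℝ)⁻¹)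
            ≤ sampleCost p (fun j => π (y j)) ℓ (fun _ => (M : ℝ)⁻¹) ∧
        sampleCost p (fun j => π (y j)) ℓ (fun _ => (M : ℝ)⁻¹)
            ≤ (1 + ε) * sampleCost p y ℓ (fun _ => (M : ℝ)⁻¹))
    (a : Fin n → ℕ) (N : ℕ) (hsa : ∑ i, a i = N) :
    sampleOPT k p (fun i => π (x i)) (fun i => (a i : ℝ) / N)
        ≤ (1 + ε) * sampleOPT k p x (fun i => (a i : ℝ) / N) ∧
    sampleOPT k p x (fun i => (a i : ℝ) / N)
        ≤ (1 + ε) * sampleOPT k p (fun i => π (x i)) (fun i => (a i : ℝ) / N) := by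
  have h1ε : (0:ℝ) < 1 + ε := by linarith
  have hw' : ∀ i, 0 ≤ (a i : ℝ) / N := fun i => by positivity
  have e : Fin N ≃ (Σ i : Fin n, Fin (a i)) :=
    Fintype.equivOfCardEq (by simp [Fintype.card_sigma, hsa])
  have hcost : ∀ ℓ : Fin n → Fin k,
      sampleCost p (fun i => π (x i)) ℓ (fun i => (a i : ℝ)/N)
          ≤ (1+ε) * sampleCost p x ℓ (fun i => (a i : ℝ)/N) ∧
      sampleCost p x ℓ (fun i => (a i : ℝ)/N)
          ≤ (1+ε) * sampleCost p (fun i => π (x i)) ℓ (fun i => (a i : ℝ)/N) := by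
    intro ℓ
    have hre1 : sampleCost p (fun j => x (e j).1) (fun j => ℓ (e j).1) (fun _ => (N : ℝ)⁻¹)
        = sampleCost p x ℓ (fun i => (a i : ℝ) / N) := sampleCost_replicate a hsa p x ℓ e
    have hre2 : sampleCost p (fun j => π (x (e j).1)) (fun j => ℓ (e j).1) (fun _ => (N : ℝ)⁻¹)
        = sampleCost p (fun i => π (x i)) ℓ (fun i => (a i : ℝ) / N) :=
      sampleCost_replicate a hsa p (fun i => π (x i)) ℓ e
    obtain ⟨hlo, hhi⟩ := hpres N (fun j => x (e j).1) (fun j => ⟨(e j).1, rfl⟩)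
      (fun j => ℓ (e j).1)
    rw [hre1, hre2] at hlo hhi
    exact ⟨hhi, (inv_mul_le_iff₀ h1ε).mp hlo⟩
  constructor
  · exact iInf_le_mul_iInf hk h1ε
      (fun ℓ => sampleCost_nonneg p (fun i => π (x i)) ℓ hw') (fun ℓ => (hcost ℓ).1)
  · exact iInf_le_mul_iInf hk h1ε
      (fun ℓ => sampleCost_nonneg p x ℓ hw') (fun ℓ => (hcost ℓ).2)


set_option maxHeartbeats 2000000 in
/-- If a dimension-reduction map `π` preserves (up to `1 ± ε` factors) the uniform-weight
sample partition costs of every finite sequence drawn from the points `x₁, …, xₙ ∈ B_d`,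
then it preserves the optimal weighted clustering costs up to `(1+ε)^{±3}` factors. -/
theorem dimension_reduction_weighted_opt_cost
    {d m n k : ℕ} (hk : 1 ≤ k)
    (p : ℝ) (hp : 1 ≤ p) (ε : ℝ) (hε0 : 0 < ε) (hε : ε < 1 / 4)
    (x : Fin n → EuclideanSpace ℝ (Fin d))
    (hx : ∀ i, x i ∈ Metric.closedBall (0 : EuclideanSpace ℝ (Fin d)) (1 / 2))
    (π : EuclideanSpace ℝ (Fin d) → EuclideanSpace ℝ (Fin m))
    (hπ : ∀ i, π (x i) ∈ Metric.closedBall (0 : EuclideanSpace ℝ (Fin m)) (1 / 2))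
    (hpres : ∀ (M : ℕ) (y : Fin M → EuclideanSpace ℝ (Fin d)),
      (∀ j, ∃ i, y j = x i) → ∀ ℓ : Fin M → Fin k,
        (1 + ε)⁻¹ * sampleCost p y ℓ (fun _ => (M : ℝ)⁻¹)
            ≤ sampleCost p (fun j => π (y j)) ℓ (fun _ => (M : ℝ)⁻¹) ∧
        sampleCost p (fun j => π (y j)) ℓ (fun _ => (M : ℝ)⁻¹)
            ≤ (1 + ε) * sampleCost p y ℓ (fun _ => (M : ℝ)⁻¹)) :
    ∀ w : Fin n → ℝ, (∀ i, 0 ≤ w i) → (∑ i, w i) = 1 →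
      ((1 + ε) ^ 3)⁻¹ * sampleOPT k p x w
          ≤ sampleOPT k p (fun i => π (x i)) w ∧
      sampleOPT k p (fun i => π (x i)) w ≤ (1 + ε) ^ 3 * sampleOPT k p x w := by
  intro w hw hsum
  have hn : 0 < n := by
    rcases Nat.eq_zero_or_pos n with h | h
    · subst h; simp at hsum
    · exact h
  have h1ε : (0:ℝ) < 1 + ε := by linarith
  have hp0 : (0:ℝ) ≤ p := by linarith
  have hA0 : 0 ≤ sampleOPT k p x w := sampleOPT_nonneg p x hw
  have hB0 : 0 ≤ sampleOPT k p (fun i => π (x i)) w := sampleOPT_nonneg p _ hw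
  have i0 : Fin n := ⟨0, hn⟩
  -- key approximation step
  have key : ∀ η : ℝ, 0 < η →
      sampleOPT k p (fun i => π (x i)) w ≤ (1+ε) * sampleOPT k p x w + η ∧
      sampleOPT k p x w ≤ (1+ε) * sampleOPT k p (fun i => π (x i)) w + η := by
    intro η hη
    obtain ⟨N, hN⟩ := exists_nat_gt ((2+ε) * ((n:ℝ)^2+1) / η)
    have hq : (0:ℝ) ≤ (2+ε) * ((n:ℝ)^2+1) / η :=
      div_nonneg (by nlinarith [sq_nonneg (n:ℝ)]) (le_of_lt hη)
    have hNpos : (0:ℝ) < N := lt_of_le_of_lt hq hN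
    set b : Fin n → ℕ := fun i => ⌊w i * N⌋₊ with hbdef
    have hble : ∀ i, (b i : ℝ) ≤ w i * N := fun i => Nat.floor_le (mul_nonneg (hw i) (Nat.cast_nonneg N))
    have hblt : ∀ i, w i * N < b i + 1 := fun i => Nat.lt_floor_add_one _
    set T : ℝ := ∑ i ∈ Finset.univ.erase i0, w i with hTdef
    have hTnn : 0 ≤ T := Finset.sum_nonneg fun i _ => hw i
    have hwi0 : w i0 + T = 1 := by
      rw [hTdef, Finset.add_sum_erase _ w (Finset.mem_univ i0), hsum]
    set S : ℕ := ∑ i ∈ Finset.univ.erase i0, b i with hSdef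
    have hScast : (S:ℝ) = ∑ i ∈ Finset.univ.erase i0, (b i : ℝ) := by push_cast [hSdef]; rfl
    have hSup : (S:ℝ) ≤ T * N := by
      rw [hScast, hTdef, Finset.sum_mul]
      exact Finset.sum_le_sum fun i _ => hble i
    have hSlow : T * N - n ≤ (S:ℝ) := by
      rw [hScast, hTdef, Finset.sum_mul]
      have h1 : ∑ i ∈ Finset.univ.erase i0, (w i * N) ≤
          ∑ i ∈ Finset.univ.erase i0, ((b i : ℝ) + 1) :=
        Finset.sum_le_sum fun i _ => le_of_lt (hblt i)
      rw [Finset.sum_add_distrib, Finset.sum_const] at h1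
      have hcard : ((Finset.univ.erase i0).card : ℝ) ≤ n := by
        have := Finset.card_le_univ (Finset.univ.erase i0)
        simp only [Finset.card_univ, Fintype.card_fin] at this
        exact_mod_cast this
      simp only [nsmul_eq_mul, mul_one] at h1
      linarith
    have hSleN : S ≤ N := by
      have : (S:ℝ) ≤ N := by nlinarith [hw i0]
      exact_mod_cast this
    set a : Fin n → ℕ := fun i => if i = i0 then N - S else b i with hadef
    have hsa : ∑ i, a i = N := by
      rw [← Finset.add_sum_erase _ a (Finset.mem_univ i0)]
      have h2 : ∑ i ∈ Finset.univ.erase i0, a i = S := by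
        rw [hSdef]
        exact Finset.sum_congr rfl fun i hi => by
          simp [hadef, Finset.ne_of_mem_erase hi]
      rw [h2]
      simp only [hadef, if_pos rfl]
      exact Nat.sub_add_cancel hSleN
    set w' : Fin n → ℝ := fun i => (a i : ℝ) / N with hw'def
    have hw'nn : ∀ i, 0 ≤ w' i := fun i => by positivity
    -- coordinatewise error
    have hcoord : ∀ i, |w i - w' i| ≤ (n:ℝ)/N := by
      intro i
      have hn0 : (0:ℝ) ≤ n := Nat.cast_nonneg n
      rcases eq_or_ne i i0 with heq | hne
      · have hcast : ((N - S : ℕ):ℝ) = (N:ℝ) - S := Nat.cast_sub hSleN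
        have hwi : w i + T = 1 := by rw [heq]; exact hwi0
        have hw'i0 : w' i = ((N:ℝ) - S)/N := by
          rw [hw'def]; simp only [hadef, if_pos heq, hcast]
        have hrw : w i - w' i = ((S:ℝ) - T * N)/N := by
          rw [hw'i0]
          field_simp
          nlinarith [hwi]
        rw [hrw, abs_div, abs_of_pos hNpos]
        have habs : |(S:ℝ) - T * N| ≤ n := abs_le.mpr ⟨by linarith, by linarith⟩
        exact div_le_div_of_nonneg_right habs (le_of_lt hNpos)
      · have hw'i : w' i = (b i : ℝ)/N := by
          rw [hw'def]; simp only [hadef, if_neg hne]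
        have hrw : w i - w' i = (w i * N - b i)/N := by
          rw [hw'i]; field_simp
        rw [hrw, abs_div, abs_of_pos hNpos]
        have habs : |w i * N - (b i:ℝ)| ≤ n := by
          rw [abs_le]
          have hn1 : (1:ℝ) ≤ n := by exact_mod_cast hn
          have h1 := hble i
          have h2 := hblt i
          have hn1 : (1:ℝ) ≤ n := by exact_mod_cast hn
          constructor <;> linarith
        exact div_le_div_of_nonneg_right habs (le_of_lt hNpos)
    have herr : ∑ i, |w i - w' i| ≤ (n:ℝ)^2/N := by
      calc ∑ i, |w i - w' i| ≤ ∑ _i : Fin n, (n:ℝ)/N :=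
            Finset.sum_le_sum fun i _ => hcoord i
        _ = n * ((n:ℝ)/N) := by
            rw [Finset.sum_const, Finset.card_univ, Fintype.card_fin, nsmul_eq_mul]
        _ = (n:ℝ)^2/N := by ring
    have herr' : ∑ i, |w' i - w i| ≤ (n:ℝ)^2/N := by
      simpa only [abs_sub_comm] using herr
    have hδη : (2+ε) * ((n:ℝ)^2/N) ≤ η := by
      rw [div_lt_iff₀ hη] at hN
      rw [show (2+ε) * ((n:ℝ)^2/N) = ((2+ε) * (n:ℝ)^2)/N from by ring, div_le_iff₀ hNpos]
      nlinarith
    obtain ⟨hstep1, hstep2⟩ := rational_step hk p ε hε0 x π hpres a N hsa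
    -- identify fun i => a i / N with w'
    have hAx : sampleOPT k p x w ≤ sampleOPT k p x w' + (n:ℝ)^2/N :=
      (sampleOPT_lipschitz hk hp0 hx hw hw'nn).trans (by linarith [herr])
    have hAx' : sampleOPT k p x w' ≤ sampleOPT k p x w + (n:ℝ)^2/N :=
      (sampleOPT_lipschitz hk hp0 hx hw'nn hw).trans (by linarith [herr'])
    have hBx : sampleOPT k p (fun i => π (x i)) w
        ≤ sampleOPT k p (fun i => π (x i)) w' + (n:ℝ)^2/N :=
      (sampleOPT_lipschitz hk hp0 hπ hw hw'nn).trans (by linarith [herr])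
    have hBx' : sampleOPT k p (fun i => π (x i)) w'
        ≤ sampleOPT k p (fun i => π (x i)) w + (n:ℝ)^2/N :=
      (sampleOPT_lipschitz hk hp0 hπ hw'nn hw).trans (by linarith [herr'])
    constructor
    · calc sampleOPT k p (fun i => π (x i)) w
          ≤ sampleOPT k p (fun i => π (x i)) w' + (n:ℝ)^2/N := hBx
        _ ≤ (1+ε) * sampleOPT k p x w' + (n:ℝ)^2/N := by linarith [hstep1]
        _ ≤ (1+ε) * (sampleOPT k p x w + (n:ℝ)^2/N) + (n:ℝ)^2/N := by nlinarith [hAx']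
        _ ≤ (1+ε) * sampleOPT k p x w + η := by nlinarith [hδη]
    · calc sampleOPT k p x w
          ≤ sampleOPT k p x w' + (n:ℝ)^2/N := hAx
        _ ≤ (1+ε) * sampleOPT k p (fun i => π (x i)) w' + (n:ℝ)^2/N := by linarith [hstep2]
        _ ≤ (1+ε) * (sampleOPT k p (fun i => π (x i)) w + (n:ℝ)^2/N) + (n:ℝ)^2/N := by
            nlinarith [hBx']
        _ ≤ (1+ε) * sampleOPT k p (fun i => π (x i)) w + η := by nlinarith [hδη]
  have hBA : sampleOPT k p (fun i => π (x i)) w ≤ (1+ε) * sampleOPT k p x w :=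
    le_of_forall_pos_le_add fun η hη => (key η hη).1
  have hAB : sampleOPT k p x w ≤ (1+ε) * sampleOPT k p (fun i => π (x i)) w :=
    le_of_forall_pos_le_add fun η hη => (key η hη).2
  have hfac : (1+ε) ≤ (1+ε)^3 := by nlinarith [sq_nonneg ε, hε0]
  constructor
  · rw [inv_mul_le_iff₀ (by positivity)]
    calc sampleOPT k p x w ≤ (1+ε) * sampleOPT k p (fun i => π (x i)) w := hAB
      _ ≤ (1+ε)^3 * sampleOPT k p (fun i => π (x i)) w :=
          mul_le_mul_of_nonneg_right hfac hB0
  · calc sampleOPT k p (fun i => π (x i)) w ≤ (1+ε) * sampleOPT k p x w := hBA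
      _ ≤ (1+ε)^3 * sampleOPT k p x w := mul_le_mul_of_nonneg_right hfac hA0
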